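/- Fix μ ∈ ℝ, D > 0, V ∈ ℝ with μV ≠ 0, V_x ∈ ℝ, and α ∈ [0,1]. For h > 0 set Pe(h) = (μ/D)V·h, Q(h) = (μ/D)V_x·h²/2, Pe⁺(h) = Pe(h) − αQ(h) and P(h) = Pe(h)/2 − αQ(h)/4. Then the function h ↦ [((1 + Pe⁺(h)/2)·(1 + αQ(h))·exp(−Pe(h)) − (1 − αQ(h)/2)·exp(−P(h)))/(Pe⁺(h)·((1 + αQ(h))·exp(−Pe(h)) − 1))] / W̃(Pe⁺(h), −3αQ(h)/4) tends to 1 as h → 0 from the right, where W̃(z,q) = (exp(z/2 + q) − 1 − z/2)/(z·(exp(z) − 1)) for z ≠ 0. -/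

import Mathlib

/-- `W̃(z,q) = (exp(z/2 + q) − 1 − z/2) / (z (exp z − 1))` (for `z ≠ 0`). -/
noncomputable def Wtilde (z q : ℝ) : ℝ :=
  (Real.exp (z / 2 + q) - 1 - z / 2) / (z * (Real.exp z - 1))

open Filter Asymptotics Topology


lemma exp_cubic_bigO : (fun u : ℝ => Real.exp u - (1 + u + u ^ 2 / 2 + u ^ 3 / 6)) =O[𝓝 (0:ℝ)]
    fun u => u ^ 4 := by
  rw [Asymptotics.isBigO_iff]
  refine ⟨5 / 96, ?_⟩
  have hev : ∀ᶠ u : ℝ in 𝓝 0, |u| ≤ 1 := by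
    have : ∀ᶠ u : ℝ in 𝓝 0, |u - 0| < 1 := eventually_abs_sub_lt 0 one_pos
    filter_upwards [this] with u hu
    simpa using hu.le
  filter_upwards [hev] with u hu
  have h4 := Real.exp_bound hu (n := 4) (by norm_num)
  have hsum : ∑ m ∈ Finset.range 4, u ^ m / (m.factorial : ℝ) = 1 + u + u ^ 2 / 2 + u ^ 3 / 6 := by
    norm_num [Finset.sum_range_succ, Nat.factorial]
  rw [hsum] at h4
  norm_num [Nat.factorial] at h4
  calc |Real.exp u - (1 + u + u ^ 2 / 2 + u ^ 3 / 6)| ≤ |u| ^ 4 * (5 / 96) := h4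
    _ = 5 / 96 * |u ^ 4| := by rw [abs_pow]; ring



lemma exp_taylor4 (a b : ℝ) :
    (fun h : ℝ => Real.exp (a * h + b * h ^ 2) -
      (1 + (a * h + b * h ^ 2) + (a * h + b * h ^ 2) ^ 2 / 2 + (a * h + b * h ^ 2) ^ 3 / 6))
      =O[𝓝 (0:ℝ)] fun h => h ^ 4 := by
  have hcont : Continuous fun h : ℝ => a * h + b * h ^ 2 := by continuity
  have hx : Filter.Tendsto (fun h : ℝ => a * h + b * h ^ 2) (𝓝 0) (𝓝 0) := by
    simpa using hcont.tendsto 0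
  have h1 := exp_cubic_bigO.comp_tendsto hx
  simp only [Function.comp_def] at h1
  refine h1.trans ?_
  have hb : (fun h : ℝ => a + b * h) =O[𝓝 (0:ℝ)] (fun _ => (1:ℝ)) :=
    ((by continuity : Continuous fun h : ℝ => a + b * h).tendsto 0).isBigO_one ℝ
  have h2 : (fun h : ℝ => a * h + b * h ^ 2) =O[𝓝 (0:ℝ)] fun h => h := by
    have h3 := (Asymptotics.isBigO_refl (fun h : ℝ => h) (𝓝 (0:ℝ))).mul hb
    exact h3.congr (fun h => by ring) (fun h => by ring)
  exact h2.pow 4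

lemma mul_bigO4 (p : ℝ → ℝ) (hp : Continuous p) {f : ℝ → ℝ}
    (hf : f =O[𝓝 (0:ℝ)] fun h : ℝ => h ^ 4) :
    (fun h => p h * f h) =O[𝓝 (0:ℝ)] fun h : ℝ => h ^ 4 :=
  (((hp.tendsto 0).isBigO_one ℝ).mul hf).congr (fun _ => rfl) (fun h => one_mul _)

lemma poly_bigO (p : ℝ → ℝ) (hp : Continuous p) :
    (fun h : ℝ => h ^ 4 * p h) =O[𝓝 (0:ℝ)] fun h : ℝ => h ^ 4 :=
  ((Asymptotics.isBigO_refl (fun h : ℝ => h ^ 4) _).mul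
    ((hp.tendsto 0).isBigO_one ℝ)).congr (fun _ => rfl) (fun h => mul_one _)

lemma tendsto2 (f : ℝ → ℝ) (A B : ℝ)
    (hf : (fun h : ℝ => f h - (A * h ^ 2 + B * h ^ 3)) =O[𝓝 (0:ℝ)] fun h : ℝ => h ^ 4) :
    Filter.Tendsto (fun h : ℝ => f h / h ^ 2) (𝓝[>] (0:ℝ)) (𝓝 A) := by
  have hsmall : Filter.Tendsto (fun h : ℝ => (f h - (A * h ^ 2 + B * h ^ 3)) / h ^ 2)
      (𝓝[>] (0:ℝ)) (𝓝 0) := by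
    have h1 : (fun h : ℝ => (f h - (A * h ^ 2 + B * h ^ 3)) / h ^ 2) =O[𝓝[>] (0:ℝ)]
        fun h : ℝ => h ^ 2 := by
      have h2 := (hf.mono nhdsWithin_le_nhds).mul
        (Asymptotics.isBigO_refl (fun h : ℝ => (h ^ 2)⁻¹) (𝓝[>] (0:ℝ)))
      refine h2.congr (fun h => (div_eq_mul_inv _ _).symm) (fun h => ?_)
      rcases eq_or_ne h 0 with rfl | hh
      · simp
      · field_simp
    refine h1.trans_tendsto ?_
    have := ((continuous_pow 2).tendsto (0:ℝ)).mono_left (nhdsWithin_le_nhds (s := Set.Ioi 0))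
    simpa using this
  have hpoly : Filter.Tendsto (fun h : ℝ => A + B * h) (𝓝[>] (0:ℝ)) (𝓝 A) := by
    have := ((by continuity : Continuous fun h : ℝ => A + B * h).tendsto 0).mono_left
      (nhdsWithin_le_nhds (s := Set.Ioi 0))
    simpa using this
  have hadd := hsmall.add hpoly
  rw [zero_add] at hadd
  refine hadd.congr' ?_
  filter_upwards [self_mem_nhdsWithin] with h hh
  have h2 : (h:ℝ) ^ 2 ≠ 0 := pow_ne_zero _ (ne_of_gt hh)
  rw [div_add' _ _ _ h2]
  congr 1
  ring

lemma tendsto3 (f : ℝ → ℝ) (B : ℝ)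
    (hf : (fun h : ℝ => f h - B * h ^ 3) =O[𝓝 (0:ℝ)] fun h : ℝ => h ^ 4) :
    Filter.Tendsto (fun h : ℝ => f h / h ^ 3) (𝓝[>] (0:ℝ)) (𝓝 B) := by
  have hsmall : Filter.Tendsto (fun h : ℝ => (f h - B * h ^ 3) / h ^ 3)
      (𝓝[>] (0:ℝ)) (𝓝 0) := by
    have h1 : (fun h : ℝ => (f h - B * h ^ 3) / h ^ 3) =O[𝓝[>] (0:ℝ)] fun h : ℝ => h := by
      have h2 := (hf.mono nhdsWithin_le_nhds).mul
        (Asymptotics.isBigO_refl (fun h : ℝ => (h ^ 3)⁻¹) (𝓝[>] (0:ℝ)))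
      refine h2.congr (fun h => (div_eq_mul_inv _ _).symm) (fun h => ?_)
      rcases eq_or_ne h 0 with rfl | hh
      · simp
      · field_simp
    refine h1.trans_tendsto ?_
    exact tendsto_id.mono_left nhdsWithin_le_nhds
  have hadd := hsmall.add (tendsto_const_nhds (x := B) (f := 𝓝[>] (0:ℝ)))
  rw [zero_add] at hadd
  refine hadd.congr' ?_
  filter_upwards [self_mem_nhdsWithin] with h hh
  have h3 : (h:ℝ) ^ 3 ≠ 0 := pow_ne_zero _ (ne_of_gt hh)
  rw [div_add' _ _ _ h3]
  congr 1
  ring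





lemma key (c s : ℝ) (hc : c ≠ 0) :
    Filter.Tendsto (fun h : ℝ =>
      (((1 + (c*h - s*h^2)/2) * (1 + s*h^2) * Real.exp (-(c*h)) -
          (1 - s*h^2/2) * Real.exp (-(c*h/2 - s*h^2/4))) /
        ((c*h - s*h^2) * ((1 + s*h^2) * Real.exp (-(c*h)) - 1))) /
        Wtilde (c*h - s*h^2) (-(3*(s*h^2))/4))
      (𝓝[>] (0:ℝ)) (𝓝 1) := by
  -- F1 : numerator of Wtilde
  have F1 : (fun h : ℝ =>
      (Real.exp ((c/2)*h + (-(5*s)/4)*h^2) - 1 - (c*h - s*h^2)/2) -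
        ((c^2/8 - 3*s/4) * h^2 + (c^3/48 - 5*s*c/8) * h^3)) =O[𝓝 (0:ℝ)] fun h => h^4 := by
    have h1 := exp_taylor4 (c/2) (-(5*s)/4)
    have h2 := poly_bigO (fun h : ℝ =>
      25/32*s^2 - 5/32*c^2*s + (25/64*c*s^2)*h - (125/384*s^3)*h^2) (by fun_prop)
    exact (h1.add h2).congr_left (fun h => by ring)
  -- F2 : numerator of inhomogeneous flux expression
  have F2 : (fun h : ℝ =>
      ((1 + (c*h - s*h^2)/2) * (1 + s*h^2) * Real.exp ((-c)*h + 0*h^2) -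
        (1 - s*h^2/2) * Real.exp ((-(c/2))*h + (s/4)*h^2)) -
        ((3*s/4 - c^2/8) * h^2 + (5*c^3/48 - s*c/8) * h^3)) =O[𝓝 (0:ℝ)] fun h => h^4 := by
    have h1 := mul_bigO4 (fun h : ℝ => (1 + (c*h - s*h^2)/2) * (1 + s*h^2)) (by fun_prop)
      (exp_taylor4 (-c) 0)
    have h2 := mul_bigO4 (fun h : ℝ => 1 - s*h^2/2) (by fun_prop)
      (exp_taylor4 (-(c/2)) (s/4))
    have h3 := poly_bigO (fun h : ℝ =>
      -(13/32)*s^2 - 7/32*c^2*s - 1/12*c^4 + (29/64*c*s^2 + 5/32*c^3*s)*h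
        + (5/384*s^3 - 15/64*c^2*s^2 - 1/12*c^4*s)*h^2
        + (-(1/128)*c*s^3 + 1/12*c^3*s^2)*h^3 + (1/768*s^4)*h^4) (by fun_prop)
    exact ((h1.sub h2).add h3).congr_left (fun h => by ring)
  -- F3 : denominator of Wtilde
  have F3 : (fun h : ℝ =>
      (c*h - s*h^2) * (Real.exp (c*h + (-s)*h^2) - 1) -
        (c^2 * h^2 + (c^3/2 - 2*c*s) * h^3)) =O[𝓝 (0:ℝ)] fun h => h^4 := by
    have h1 := mul_bigO4 (fun h : ℝ => c*h - s*h^2) (by fun_prop) (exp_taylor4 c (-s))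
    have h2 := poly_bigO (fun h : ℝ =>
      s^2 - 3/2*c^2*s + 1/6*c^4 + (3/2*c*s^2 - 2/3*c^3*s)*h
        + (-(1/2)*s^3 + c^2*s^2)*h^2 - (2/3*c*s^3)*h^3 + (1/6*s^4)*h^4) (by fun_prop)
    exact (h1.add h2).congr_left (fun h => by ring)
  -- F4 : denominator of flux expression
  have F4 : (fun h : ℝ =>
      (c*h - s*h^2) * ((1 + s*h^2) * Real.exp ((-c)*h + 0*h^2) - 1) -
        (-(c^2) * h^2 + (c^3/2 + 2*c*s) * h^3)) =O[𝓝 (0:ℝ)] fun h => h^4 := by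
    have h1 := mul_bigO4 (fun h : ℝ => (c*h - s*h^2) * (1 + s*h^2)) (by fun_prop)
      (exp_taylor4 (-c) 0)
    have h2 := poly_bigO (fun h : ℝ =>
      -s^2 - 3/2*c^2*s - 1/6*c^4 + (c*s^2 + 2/3*c^3*s)*h
        + (-(1/2)*c^2*s^2 - 1/6*c^4*s)*h^2 + (1/6*c^3*s^2)*h^3) (by fun_prop)
    exact (h1.add h2).congr_left (fun h => by ring)
  have hne : ∀ᶠ h : ℝ in 𝓝[>] (0:ℝ), h ≠ 0 := by
    filter_upwards [self_mem_nhdsWithin] with h hh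
    exact ne_of_gt hh
  -- limits of denominators
  have TdW : Filter.Tendsto (fun h : ℝ =>
      ((c*h - s*h^2) * (Real.exp (c*h + (-s)*h^2) - 1)) / h^2) (𝓝[>] (0:ℝ)) (𝓝 (c^2)) :=
    tendsto2 _ _ _ F3
  have TdN : Filter.Tendsto (fun h : ℝ =>
      ((c*h - s*h^2) * ((1 + s*h^2) * Real.exp ((-c)*h + 0*h^2) - 1)) / h^2)
      (𝓝[>] (0:ℝ)) (𝓝 (-(c^2))) := tendsto2 _ _ _ F4
  have main2 : Filter.Tendsto (fun h : ℝ =>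
      ((c*h - s*h^2) * (Real.exp (c*h + (-s)*h^2) - 1)) /
        ((c*h - s*h^2) * ((1 + s*h^2) * Real.exp ((-c)*h + 0*h^2) - 1)))
      (𝓝[>] (0:ℝ)) (𝓝 (-1)) := by
    have hdiv := TdW.div TdN (neg_ne_zero.mpr (pow_ne_zero 2 hc))
    have hval : c^2 / -(c^2) = -1 := by
      rw [div_neg, div_self (pow_ne_zero 2 hc)]
    rw [hval] at hdiv
    refine hdiv.congr' ?_
    filter_upwards [hne] with h hh
    simp only [Pi.div_apply]
    rw [div_div_div_comm, div_self (pow_ne_zero 2 hh), div_one]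
  -- limits of numerators : case split
  have main1 : Filter.Tendsto (fun h : ℝ =>
      ((1 + (c*h - s*h^2)/2) * (1 + s*h^2) * Real.exp ((-c)*h + 0*h^2) -
        (1 - s*h^2/2) * Real.exp ((-(c/2))*h + (s/4)*h^2)) /
      (Real.exp ((c/2)*h + (-(5*s)/4)*h^2) - 1 - (c*h - s*h^2)/2))
      (𝓝[>] (0:ℝ)) (𝓝 (-1)) := by
    by_cases hE : c^2/8 - 3*s/4 = 0
    · -- degenerate case : go to order h^3
      have hs : s = c^2/6 := by linarith
      have hBval : c^3/48 - 5*s*c/8 = -(c^3)/12 := by rw [hs]; ring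
      have hBne : c^3/48 - 5*s*c/8 ≠ 0 := by
        rw [hBval]
        simp [pow_ne_zero, hc]
      have hE' : 3*s/4 - c^2/8 = 0 := by linarith
      have F1' := F1.congr_left (f₂ := fun h : ℝ =>
        (Real.exp ((c/2)*h + (-(5*s)/4)*h^2) - 1 - (c*h - s*h^2)/2) -
          (c^3/48 - 5*s*c/8) * h^3) (fun h => by rw [hE]; ring)
      have F2' := F2.congr_left (f₂ := fun h : ℝ =>
        ((1 + (c*h - s*h^2)/2) * (1 + s*h^2) * Real.exp ((-c)*h + 0*h^2) -
          (1 - s*h^2/2) * Real.exp ((-(c/2))*h + (s/4)*h^2)) -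
          (5*c^3/48 - s*c/8) * h^3) (fun h => by rw [hE']; ring)
      have TnW := tendsto3 _ _ F1'
      have TnN := tendsto3 _ _ F2'
      have hdiv := TnN.div TnW hBne
      have hval : (5*c^3/48 - s*c/8) / (c^3/48 - 5*s*c/8) = -1 := by
        have hsum0 : (5*c^3/48 - s*c/8) = -(c^3/48 - 5*s*c/8) := by rw [hs]; ring
        rw [hsum0, neg_div, div_self hBne]
      rw [hval] at hdiv
      refine hdiv.congr' ?_
      filter_upwards [hne] with h hh
      simp only [Pi.div_apply]
      rw [div_div_div_comm, div_self (pow_ne_zero 3 hh), div_one]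
    · -- generic case : order h^2
      have TnW := tendsto2 _ _ _ F1
      have TnN := tendsto2 _ _ _ F2
      have hdiv := TnN.div TnW hE
      have hval : (3*s/4 - c^2/8) / (c^2/8 - 3*s/4) = -1 := by
        rw [show (3*s/4 - c^2/8) = -(c^2/8 - 3*s/4) from by ring, neg_div, div_self hE]
      rw [hval] at hdiv
      refine hdiv.congr' ?_
      filter_upwards [hne] with h hh
      simp only [Pi.div_apply]
      rw [div_div_div_comm, div_self (pow_ne_zero 2 hh), div_one]
  have final := main1.mul main2
  norm_num at final
  refine final.congr (fun h => ?_)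
  have quad : ∀ a b u v : ℝ, a / b / (u / v) = a / u * (v / b) := by
    intro a b u v
    rw [div_div_div_comm, div_eq_mul_inv, inv_div]
  simp only [Wtilde]
  rw [quad]
  rw [show (c*h - s*h^2)/2 + -(3*(s*h^2))/4 = (c/2)*h + (-(5*s)/4)*h^2 from by ring,
    show -(c*h) = (-c)*h + 0*h^2 from by ring,
    show -(c*h/2 - s*h^2/4) = (-(c/2))*h + (s/4)*h^2 from by ring,
    show c*h - s*h^2 = c*h + (-s)*h^2 from by ring]
  ring


theorem asymptotic_sjp1_coefficient_plus (μ D V Vx α : ℝ)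
    (hD : D > 0) (hμV : μ * V ≠ 0) (hα : α ∈ Set.Icc (0:ℝ) 1) :
    Filter.Tendsto
      (fun h : ℝ =>
        let Pe := (μ / D) * V * h
        let Q := (μ / D) * Vx * h ^ 2 / 2
        let Pep := Pe - α * Q
        let P := Pe / 2 - α * Q / 4
        (((1 + Pep / 2) * (1 + α * Q) * Real.exp (-Pe) -
            (1 - α * Q / 2) * Real.exp (-P)) /
          (Pep * ((1 + α * Q) * Real.exp (-Pe) - 1))) /
          Wtilde Pep (-(3 * (α * Q)) / 4))
      (nhdsWithin 0 (Set.Ioi 0)) (nhds 1) := by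
  have hc : (μ / D) * V ≠ 0 := by
    rw [div_mul_eq_mul_div]
    exact div_ne_zero hμV (ne_of_gt hD)
  have hk := key ((μ / D) * V) (α * ((μ / D) * Vx) / 2) hc
  refine hk.congr (fun h => ?_)
  simp only []
  rw [show α * ((μ / D) * Vx * h ^ 2 / 2) = α * ((μ / D) * Vx) / 2 * h ^ 2 from by ring]
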